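/- Assume Hypothesis (LC): for some λ₀ ∈ ℝ there are real-valued solutions Φ₀, Θ₀ of τu = λ₀u with W(Θ₀,Φ₀) = 1 such that W_a(Φ₀,u) = lim_{x→a} W_x(Φ₀,u) and W_a(Θ₀,u) = lim_{x→a} W_x(Θ₀,u) exist for every solution u of τu = zu and every z ∈ ℂ. Fix c ∈ I and let c(z,x), s(z,x) be the solutions of τu = zu with c(z,c) = (1,0)ᵀ and s(z,c) = (0,1)ᵀ, and define Φ(z,x) = W_a(c(z),Φ₀)s(z,x) − W_a(s(z),Φ₀)c(z,x) and Θ(z,x) = W_a(c(z),Θ₀)s(z,x) − W_a(s(z),Θ₀)c(z,x). Then W(Θ(z),Φ(z)) = 1 for all z ∈ ℂ, and for all z, ẑ ∈ ℂ one has W_a(Θ(z),Φ(ẑ)) = 1 and W_a(Φ(ẑ),Φ(z)) = W_a(Θ(ẑ),Θ(z)) = 0. -/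
import Mathlib


open MeasureTheory Set Filter Topology Complex Asymptotics

noncomputable section

/-- `q` is locally integrable on the interval `(a, b)`. -/
def LocInt (a b : ℝ) (q : ℝ → ℝ) : Prop :=
  ∀ x ∈ Set.Ioo a b, ∀ y ∈ Set.Ioo a b, IntervalIntegrable q MeasureTheory.volume x y

/-- The Wronskian `W_x(f,g) = f₁(x)g₂(x) - f₂(x)g₁(x)`. -/
def Wr (f g : ℝ → ℂ × ℂ) (x : ℝ) : ℂ :=
  (f x).1 * (g x).2 - (f x).2 * (g x).1

/-- `g = τ f` on `(a,b)` in the locally absolutely continuous sense, where `τ` is the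
one-dimensional Dirac differential expression `τ = (1/i) σ₂ d/dx + Q(x)` with potential
matrix entries `Q11 Q12 Q21 Q22`. -/
def IsTau (a b : ℝ) (Q11 Q12 Q21 Q22 : ℝ → ℝ) (f g : ℝ → ℂ × ℂ) : Prop :=
  ContinuousOn f (Set.Ioo a b) ∧
  ∀ x₀ ∈ Set.Ioo a b, ∀ x ∈ Set.Ioo a b,
    IntervalIntegrable (fun t => (g t).2 - (Q21 t : ℂ) * (f t).1 - (Q22 t : ℂ) * (f t).2)
      MeasureTheory.volume x₀ x ∧
    IntervalIntegrable (fun t => (Q11 t : ℂ) * (f t).1 + (Q12 t : ℂ) * (f t).2 - (g t).1)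
      MeasureTheory.volume x₀ x ∧
    (f x).1 = (f x₀).1 + ∫ t in x₀..x, ((g t).2 - (Q21 t : ℂ) * (f t).1 - (Q22 t : ℂ) * (f t).2) ∧
    (f x).2 = (f x₀).2 + ∫ t in x₀..x, ((Q11 t : ℂ) * (f t).1 + (Q12 t : ℂ) * (f t).2 - (g t).1)

/-- `u` is a solution of `τ u = z u` on `(a,b)`. -/
def IsSol (a b : ℝ) (Q11 Q12 Q21 Q22 : ℝ → ℝ) (z : ℂ) (u : ℝ → ℂ × ℂ) : Prop :=
  IsTau a b Q11 Q12 Q21 Q22 u (fun x => z • u x)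

/-- Solution of the Dirac equation with mass `m`, electrostatic potential `qel`,
anomalous magnetic moment `qam` and scalar potential `qsc`. -/
def DiracSol (a b m : ℝ) (qel qam qsc : ℝ → ℝ) (z : ℂ) (u : ℝ → ℂ × ℂ) : Prop :=
  IsSol a b (fun x => qel x + m + qsc x) qam qam (fun x => qel x - m - qsc x) z u

/-- `f` is real-valued (componentwise). -/
def RealValued (f : ℝ → ℂ × ℂ) : Prop :=
  ∀ x, starRingEnd ℂ (f x).1 = (f x).1 ∧ starRingEnd ℂ (f x).2 = (f x).2

lemma wr_antisymm (f g : ℝ → ℂ × ℂ) (x : ℝ) : Wr f g x = - Wr g f x := by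
  simp only [Wr]; ring

lemma plucker (f g h k : ℝ → ℂ × ℂ) (x : ℝ) :
    Wr f g x * Wr h k x + Wr f h x * Wr k g x + Wr f k x * Wr g h x = 0 := by
  simp only [Wr]; ring

lemma Wr_comb_left {P s c : ℝ → ℂ × ℂ} {α β : ℂ} (h : ∀ y, P y = α • s y - β • c y)
    (w : ℝ → ℂ × ℂ) (x : ℝ) : Wr P w x = α * Wr s w x - β * Wr c w x := by
  simp only [Wr, h x, Prod.fst_sub, Prod.snd_sub, Prod.smul_fst, Prod.smul_snd, smul_eq_mul]
  ring

lemma Wr_comb_right {P s c : ℝ → ℂ × ℂ} {α β : ℂ} (h : ∀ y, P y = α • s y - β • c y)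
    (w : ℝ → ℂ × ℂ) (x : ℝ) : Wr w P x = α * Wr w s x - β * Wr w c x := by
  simp only [Wr, h x, Prod.fst_sub, Prod.snd_sub, Prod.smul_fst, Prod.smul_snd, smul_eq_mul]
  ring

lemma fubini_core (x₀ x : ℝ) (hle : x₀ ≤ x) (f g : ℝ → ℂ)
    (hf : IntervalIntegrable f volume x₀ x) (hg : IntervalIntegrable g volume x₀ x) :
    ((∫ t in x₀..x, f t * ∫ s in x₀..t, g s) + ∫ t in x₀..x, (∫ s in x₀..t, f s) * g t)
      = (∫ t in x₀..x, f t) * ∫ t in x₀..x, g t := by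
  have hfi : IntegrableOn f (Set.Ioc x₀ x) volume :=
    (intervalIntegrable_iff_integrableOn_Ioc_of_le hle).1 hf
  have hgi : IntegrableOn g (Set.Ioc x₀ x) volume :=
    (intervalIntegrable_iff_integrableOn_Ioc_of_le hle).1 hg
  set μ : MeasureTheory.Measure ℝ := volume.restrict (Set.Ioc x₀ x) with hμdef
  have hsm : MeasurableSet {p : ℝ × ℝ | p.1 ≤ p.2} :=
    measurableSet_le measurable_fst measurable_snd
  have key : ∀ (h c : ℝ → ℂ), ∀ t ∈ Set.Ioc x₀ x,
      (∫ s, (if s ≤ t then h s * c t else 0) ∂μ) = (∫ s in x₀..t, h s) * c t := by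
    intro h c t ht
    have h1 : (fun s => if s ≤ t then h s * c t else 0)
        = (Set.Iic t).indicator (fun s => h s * c t) := by
      ext s; simp [Set.indicator_apply]
    have h2 : Set.Iic t ∩ Set.Ioc x₀ x = Set.Ioc x₀ t := by
      rw [Set.inter_comm, Set.Ioc_inter_Iic, inf_eq_right.mpr ht.2]
    rw [h1, MeasureTheory.integral_indicator measurableSet_Iic, hμdef,
      Measure.restrict_restrict measurableSet_Iic, h2,
      MeasureTheory.integral_mul_const, intervalIntegral.integral_of_le ht.1.le]
  set K₁ : ℝ × ℝ → ℂ := {p : ℝ × ℝ | p.1 ≤ p.2}.indicator (fun p => g p.1 * f p.2) with hK₁def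
  set K₂ : ℝ × ℝ → ℂ := {p : ℝ × ℝ | p.1 ≤ p.2}.indicator (fun p => f p.1 * g p.2) with hK₂def
  have hK₁i : Integrable K₁ (μ.prod μ) := (hgi.mul_prod hfi).indicator hsm
  have hK₂i : Integrable K₂ (μ.prod μ) := (hfi.mul_prod hgi).indicator hsm
  have t1 : (∫ t in x₀..x, f t * ∫ s in x₀..t, g s) = ∫ p, K₁ p ∂(μ.prod μ) := by
    rw [MeasureTheory.integral_prod_symm _ hK₁i, intervalIntegral.integral_of_le hle]
    refine MeasureTheory.integral_congr_ae ?_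
    filter_upwards [MeasureTheory.ae_restrict_mem measurableSet_Ioc] with t ht
    have h3 : ∀ s : ℝ, K₁ (s, t) = if s ≤ t then g s * f t else 0 := by
      intro s; simp [hK₁def, Set.indicator_apply]
    simp only [h3]
    rw [key g f t ht, mul_comm]
  have t2 : (∫ t in x₀..x, (∫ s in x₀..t, f s) * g t) = ∫ p, K₂ p ∂(μ.prod μ) := by
    rw [MeasureTheory.integral_prod_symm _ hK₂i, intervalIntegral.integral_of_le hle]
    refine MeasureTheory.integral_congr_ae ?_
    filter_upwards [MeasureTheory.ae_restrict_mem measurableSet_Ioc] with t ht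
    have h3 : ∀ s : ℝ, K₂ (s, t) = if s ≤ t then f s * g t else 0 := by
      intro s; simp [hK₂def, Set.indicator_apply]
    simp only [h3]
    rw [key f g t ht]
  have t3 : ∫ p, K₂ p ∂(μ.prod μ) = ∫ p, K₂ p.swap ∂(μ.prod μ) :=
    (MeasureTheory.integral_prod_swap K₂).symm
  have hdiag : (μ.prod μ) {p : ℝ × ℝ | p.1 = p.2} = 0 := by
    rw [Measure.prod_apply (measurableSet_eq_fun measurable_fst measurable_snd)]
    have h4 : ∀ s : ℝ, (Prod.mk s ⁻¹' {p : ℝ × ℝ | p.1 = p.2}) = {s} := by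
      intro s; ext t; simp [eq_comm]
    simp [h4]
  have hae : (fun p : ℝ × ℝ => K₁ p + K₂ p.swap) =ᵐ[μ.prod μ] fun p => g p.1 * f p.2 := by
    have hsub : {p : ℝ × ℝ | ¬ (K₁ p + K₂ p.swap = g p.1 * f p.2)}
        ⊆ {p : ℝ × ℝ | p.1 = p.2} := by
      intro p hp
      simp only [Set.mem_setOf_eq] at hp ⊢
      by_contra hne
      apply hp
      rcases Ne.lt_or_gt hne with hlt | hlt
      · simp [hK₁def, hK₂def, Set.indicator_apply, hlt.le, not_le.mpr hlt]
      · simp [hK₁def, hK₂def, Set.indicator_apply, hlt.le, not_le.mpr hlt, mul_comm]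
    exact MeasureTheory.ae_iff.mpr (measure_mono_null hsub hdiag)
  have t5 : ∫ p, (K₁ p + K₂ p.swap) ∂(μ.prod μ)
      = (∫ p, K₁ p ∂(μ.prod μ)) + ∫ p, K₂ p.swap ∂(μ.prod μ) :=
    MeasureTheory.integral_add hK₁i hK₂i.swap
  have t4 : ∫ p, (K₁ p + K₂ p.swap) ∂(μ.prod μ) = (∫ s, g s ∂μ) * ∫ s, f s ∂μ := by
    rw [MeasureTheory.integral_congr_ae hae, MeasureTheory.integral_prod_mul]
  rw [t1, t2, t3, ← t5, t4, intervalIntegral.integral_of_le hle,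
    intervalIntegral.integral_of_le hle, ← hμdef]
  exact mul_comm _ _

lemma prod_rule (x₀ x : ℝ) (hle : x₀ ≤ x) (F G f g : ℝ → ℂ)
    (hf : IntervalIntegrable f volume x₀ x) (hg : IntervalIntegrable g volume x₀ x)
    (hF : ∀ t ∈ Set.Icc x₀ x, F t = F x₀ + ∫ s in x₀..t, f s)
    (hG : ∀ t ∈ Set.Icc x₀ x, G t = G x₀ + ∫ s in x₀..t, g s) :
    F x * G x = F x₀ * G x₀ + ((∫ t in x₀..x, f t * G t) + ∫ t in x₀..x, F t * g t) := by
  have hu : Set.uIcc x₀ x = Set.Icc x₀ x := Set.uIcc_of_le hle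
  have hPf : ContinuousOn (fun t => ∫ s in x₀..t, f s) (Set.uIcc x₀ x) :=
    intervalIntegral.continuousOn_primitive_interval' hf
      (by rw [hu]; exact Set.left_mem_Icc.mpr hle)
  have hPg : ContinuousOn (fun t => ∫ s in x₀..t, g s) (Set.uIcc x₀ x) :=
    intervalIntegral.continuousOn_primitive_interval' hg
      (by rw [hu]; exact Set.left_mem_Icc.mpr hle)
  have e1 : (∫ t in x₀..x, f t * G t)
      = (∫ t in x₀..x, f t) * G x₀ + ∫ t in x₀..x, f t * ∫ s in x₀..t, g s := by
    rw [← intervalIntegral.integral_mul_const, ← intervalIntegral.integral_add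
      (hf.mul_const _) (hf.mul_continuousOn hPg)]
    refine intervalIntegral.integral_congr fun t ht => ?_
    rw [hu] at ht
    rw [hG t ht]; ring
  have e2 : (∫ t in x₀..x, F t * g t)
      = F x₀ * (∫ t in x₀..x, g t) + ∫ t in x₀..x, (∫ s in x₀..t, f s) * g t := by
    rw [← intervalIntegral.integral_const_mul, ← intervalIntegral.integral_add
      (hg.const_mul _) (hg.continuousOn_mul hPf)]
    refine intervalIntegral.integral_congr fun t ht => ?_
    rw [hu] at ht
    rw [hF t ht]; ring
  have e3 := fubini_core x₀ x hle f g hf hg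
  have e4 := hF x (Set.right_mem_Icc.mpr hle)
  have e5 := hG x (Set.right_mem_Icc.mpr hle)
  rw [e1, e2, e4, e5]
  linear_combination -e3

lemma wr_const_aux (a b : ℝ) (Q11 Q12 Q21 Q22 : ℝ → ℝ) (hQ : ∀ t, Q12 t = Q21 t) (z : ℂ)
    (u v : ℝ → ℂ × ℂ) (hu : IsSol a b Q11 Q12 Q21 Q22 z u) (hv : IsSol a b Q11 Q12 Q21 Q22 z v)
    (x₀ x : ℝ) (hx₀ : x₀ ∈ Set.Ioo a b) (hx : x ∈ Set.Ioo a b) (hle : x₀ ≤ x) :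
    Wr u v x = Wr u v x₀ := by
  obtain ⟨huc, hui⟩ := hu
  obtain ⟨hvc, hvi⟩ := hv
  have hsub : Set.Icc x₀ x ⊆ Set.Ioo a b := fun t ht =>
    ⟨lt_of_lt_of_le hx₀.1 ht.1, lt_of_le_of_lt ht.2 hx.2⟩
  have husub : Set.uIcc x₀ x = Set.Icc x₀ x := Set.uIcc_of_le hle
  set f1 : ℝ → ℂ := fun t => (z • u t).2 - (Q21 t : ℂ) * (u t).1 - (Q22 t : ℂ) * (u t).2 with hf1
  set f2 : ℝ → ℂ := fun t => (Q11 t : ℂ) * (u t).1 + (Q12 t : ℂ) * (u t).2 - (z • u t).1 with hf2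
  set g1 : ℝ → ℂ := fun t => (z • v t).2 - (Q21 t : ℂ) * (v t).1 - (Q22 t : ℂ) * (v t).2 with hg1
  set g2 : ℝ → ℂ := fun t => (Q11 t : ℂ) * (v t).1 + (Q12 t : ℂ) * (v t).2 - (z • v t).1 with hg2
  have hif1 : IntervalIntegrable f1 volume x₀ x := (hui x₀ hx₀ x hx).1
  have hif2 : IntervalIntegrable f2 volume x₀ x := (hui x₀ hx₀ x hx).2.1
  have hig1 : IntervalIntegrable g1 volume x₀ x := (hvi x₀ hx₀ x hx).1
  have hig2 : IntervalIntegrable g2 volume x₀ x := (hvi x₀ hx₀ x hx).2.1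
  have hu1c : ContinuousOn (fun t => (u t).1) (Set.uIcc x₀ x) := by
    rw [husub]; exact (continuous_fst.comp_continuousOn huc).mono hsub
  have hu2c : ContinuousOn (fun t => (u t).2) (Set.uIcc x₀ x) := by
    rw [husub]; exact (continuous_snd.comp_continuousOn huc).mono hsub
  have hv1c : ContinuousOn (fun t => (v t).1) (Set.uIcc x₀ x) := by
    rw [husub]; exact (continuous_fst.comp_continuousOn hvc).mono hsub
  have hv2c : ContinuousOn (fun t => (v t).2) (Set.uIcc x₀ x) := by
    rw [husub]; exact (continuous_snd.comp_continuousOn hvc).mono hsub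
  have P1 : (u x).1 * (v x).2 = (u x₀).1 * (v x₀).2
      + ((∫ t in x₀..x, f1 t * (v t).2) + ∫ t in x₀..x, (u t).1 * g2 t) :=
    prod_rule x₀ x hle (fun t => (u t).1) (fun t => (v t).2) f1 g2 hif1 hig2
      (fun t ht => (hui x₀ hx₀ t (hsub ht)).2.2.1) (fun t ht => (hvi x₀ hx₀ t (hsub ht)).2.2.2)
  have P2 : (u x).2 * (v x).1 = (u x₀).2 * (v x₀).1
      + ((∫ t in x₀..x, f2 t * (v t).1) + ∫ t in x₀..x, (u t).2 * g1 t) :=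
    prod_rule x₀ x hle (fun t => (u t).2) (fun t => (v t).1) f2 g1 hif2 hig1
      (fun t ht => (hui x₀ hx₀ t (hsub ht)).2.2.2) (fun t ht => (hvi x₀ hx₀ t (hsub ht)).2.2.1)
  have hA1 : IntervalIntegrable (fun t => f1 t * (v t).2) volume x₀ x :=
    hif1.mul_continuousOn hv2c
  have hA2 : IntervalIntegrable (fun t => (u t).1 * g2 t) volume x₀ x :=
    hig2.continuousOn_mul hu1c
  have hB1 : IntervalIntegrable (fun t => f2 t * (v t).1) volume x₀ x :=
    hif2.mul_continuousOn hv1c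
  have hB2 : IntervalIntegrable (fun t => (u t).2 * g1 t) volume x₀ x :=
    hig1.continuousOn_mul hu2c
  have hsplitA : (∫ t in x₀..x, f1 t * (v t).2) + (∫ t in x₀..x, (u t).1 * g2 t)
      = ∫ t in x₀..x, (f1 t * (v t).2 + (u t).1 * g2 t) :=
    (intervalIntegral.integral_add hA1 hA2).symm
  have hsplitB : (∫ t in x₀..x, f2 t * (v t).1) + (∫ t in x₀..x, (u t).2 * g1 t)
      = ∫ t in x₀..x, (f2 t * (v t).1 + (u t).2 * g1 t) :=
    (intervalIntegral.integral_add hB1 hB2).symm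
  have hzero : (∫ t in x₀..x, (f1 t * (v t).2 + (u t).1 * g2 t))
      - (∫ t in x₀..x, (f2 t * (v t).1 + (u t).2 * g1 t)) = 0 := by
    rw [← intervalIntegral.integral_sub (hA1.add hA2) (hB1.add hB2)]
    have hz : ∀ t : ℝ, (f1 t * (v t).2 + (u t).1 * g2 t)
        - (f2 t * (v t).1 + (u t).2 * g1 t) = 0 := by
      intro t
      simp only [hf1, hf2, hg1, hg2, Prod.smul_fst, Prod.smul_snd, smul_eq_mul, hQ]
      ring
    simp only [hz, intervalIntegral.integral_zero]
  simp only [Wr]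
  linear_combination P1 - P2 + hsplitA - hsplitB + hzero

lemma wr_const (a b : ℝ) (Q11 Q12 Q21 Q22 : ℝ → ℝ) (hQ : ∀ t, Q12 t = Q21 t) (z : ℂ)
    (u v : ℝ → ℂ × ℂ) (hu : IsSol a b Q11 Q12 Q21 Q22 z u) (hv : IsSol a b Q11 Q12 Q21 Q22 z v)
    (x₀ x : ℝ) (hx₀ : x₀ ∈ Set.Ioo a b) (hx : x ∈ Set.Ioo a b) :
    Wr u v x = Wr u v x₀ := by
  rcases le_total x₀ x with hle | hle
  · exact wr_const_aux a b Q11 Q12 Q21 Q22 hQ z u v ⟨hu.1, hu.2⟩ ⟨hv.1, hv.2⟩ x₀ x hx₀ hx hle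
  · exact (wr_const_aux a b Q11 Q12 Q21 Q22 hQ z u v ⟨hu.1, hu.2⟩ ⟨hv.1, hv.2⟩ x x₀ hx hx₀ hle).symm

/-- Under Hypothesis (LC) the solutions
`Φ(z,x) = W_a(c(z),Φ₀)s(z,x) - W_a(s(z),Φ₀)c(z,x)` and
`Θ(z,x) = W_a(c(z),Θ₀)s(z,x) - W_a(s(z),Θ₀)c(z,x)` satisfy `W(Θ(z),Φ(z)) = 1`, and
moreover `W_a(Θ(z),Φ(z')) = 1` and `W_a(Φ(z'),Φ(z)) = W_a(Θ(z'),Θ(z)) = 0`. -/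
theorem statement6
    (a b : ℝ) (hab : a < b) (m : ℝ) (hm : 0 ≤ m)
    (qel qam qsc : ℝ → ℝ)
    (hqel : LocInt a b qel) (hqam : LocInt a b qam) (hqsc : LocInt a b qsc)
    -- Hypothesis (LC)
    (lam₀ : ℝ) (Φ₀ Θ₀ : ℝ → ℂ × ℂ)
    (hΦ₀ : DiracSol a b m qel qam qsc (lam₀ : ℂ) Φ₀)
    (hΘ₀ : DiracSol a b m qel qam qsc (lam₀ : ℂ) Θ₀)
    (hΦ₀r : RealValued Φ₀) (hΘ₀r : RealValued Θ₀)
    (hW₀ : ∀ x ∈ Set.Ioo a b, Wr Θ₀ Φ₀ x = 1)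
    (hyp : ∀ z : ℂ, ∀ u : ℝ → ℂ × ℂ, DiracSol a b m qel qam qsc z u →
      (∃ L : ℂ, Filter.Tendsto (fun x => Wr Φ₀ u x) (nhdsWithin a (Set.Ioi a)) (nhds L)) ∧
      (∃ L : ℂ, Filter.Tendsto (fun x => Wr Θ₀ u x) (nhdsWithin a (Set.Ioi a)) (nhds L)))
    -- the fundamental system `c(z,x)`, `s(z,x)` normalized at the base point `c₀ ∈ I`
    (c₀ : ℝ) (hc₀ : c₀ ∈ Set.Ioo a b)
    (csol ssol : ℂ → ℝ → ℂ × ℂ)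
    (hcsol : ∀ z, DiracSol a b m qel qam qsc z (csol z) ∧ csol z c₀ = (1, 0))
    (hssol : ∀ z, DiracSol a b m qel qam qsc z (ssol z) ∧ ssol z c₀ = (0, 1))
    -- the limits `W_a(c(z),Φ₀)`, `W_a(s(z),Φ₀)`, `W_a(c(z),Θ₀)`, `W_a(s(z),Θ₀)`
    (WcΦ WsΦ WcΘ WsΘ : ℂ → ℂ)
    (hWcΦ : ∀ z, Filter.Tendsto (fun x => Wr (csol z) Φ₀ x) (nhdsWithin a (Set.Ioi a)) (nhds (WcΦ z)))
    (hWsΦ : ∀ z, Filter.Tendsto (fun x => Wr (ssol z) Φ₀ x) (nhdsWithin a (Set.Ioi a)) (nhds (WsΦ z)))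
    (hWcΘ : ∀ z, Filter.Tendsto (fun x => Wr (csol z) Θ₀ x) (nhdsWithin a (Set.Ioi a)) (nhds (WcΘ z)))
    (hWsΘ : ∀ z, Filter.Tendsto (fun x => Wr (ssol z) Θ₀ x) (nhdsWithin a (Set.Ioi a)) (nhds (WsΘ z)))
    -- the solutions `Φ(z,x)` and `Θ(z,x)`
    (Φ Θ : ℂ → ℝ → ℂ × ℂ)
    (hΦ : ∀ z x, Φ z x = WcΦ z • ssol z x - WsΦ z • csol z x)
    (hΘ : ∀ z x, Θ z x = WcΘ z • ssol z x - WsΘ z • csol z x) :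
    (∀ z : ℂ, ∀ x ∈ Set.Ioo a b, Wr (Θ z) (Φ z) x = 1) ∧
    (∀ z z' : ℂ,
      Filter.Tendsto (fun x => Wr (Θ z) (Φ z') x) (nhdsWithin a (Set.Ioi a)) (nhds 1) ∧
      Filter.Tendsto (fun x => Wr (Φ z') (Φ z) x) (nhdsWithin a (Set.Ioi a)) (nhds 0) ∧
      Filter.Tendsto (fun x => Wr (Θ z') (Θ z) x) (nhdsWithin a (Set.Ioi a)) (nhds 0)) := by
  have hIoo : Set.Ioo a b ∈ nhdsWithin a (Set.Ioi a) :=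
    Ioo_mem_nhdsGT_of_mem ⟨le_refl a, hab⟩
  -- the Wronskian of c and s is constant equal to 1
  have hcs : ∀ z : ℂ, ∀ x ∈ Set.Ioo a b, Wr (csol z) (ssol z) x = 1 := by
    intro z x hx
    have h := wr_const a b _ qam qam _ (fun t => rfl) z (csol z) (ssol z)
      (hcsol z).1 (hssol z).1 c₀ x hc₀ hx
    rw [h]
    simp [Wr, (hcsol z).2, (hssol z).2]
  -- A z = 1
  have hA : ∀ z : ℂ, WcΘ z * WsΦ z - WsΘ z * WcΦ z = 1 := by
    intro z
    have T1 : Filter.Tendsto (fun x => Wr (csol z) Θ₀ x * Wr (ssol z) Φ₀ x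
        - Wr (csol z) Φ₀ x * Wr (ssol z) Θ₀ x) (nhdsWithin a (Set.Ioi a))
        (nhds (WcΘ z * WsΦ z - WcΦ z * WsΘ z)) :=
      ((hWcΘ z).mul (hWsΦ z)).sub ((hWcΦ z).mul (hWsΘ z))
    have T2 : Filter.Tendsto (fun x => Wr (csol z) Θ₀ x * Wr (ssol z) Φ₀ x
        - Wr (csol z) Φ₀ x * Wr (ssol z) Θ₀ x) (nhdsWithin a (Set.Ioi a)) (nhds 1) := by
      refine Filter.Tendsto.congr' ?_ tendsto_const_nhds
      filter_upwards [hIoo] with x hx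
      have P := plucker (csol z) (ssol z) Θ₀ Φ₀ x
      have h3 := wr_antisymm Φ₀ (ssol z) x
      rw [hcs z x hx, hW₀ x hx, h3] at P
      linear_combination P
    have h := tendsto_nhds_unique T1 T2
    linear_combination h
  have hexΘ : ∀ (z : ℂ) (w : ℝ → ℂ × ℂ), (fun x => Wr (Θ z) w x)
      = fun x => WcΘ z * Wr (ssol z) w x - WsΘ z * Wr (csol z) w x := by
    intro z w; funext x; exact Wr_comb_left (hΘ z) w x
  have hexΦ : ∀ (z : ℂ) (w : ℝ → ℂ × ℂ), (fun x => Wr (Φ z) w x)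
      = fun x => WcΦ z * Wr (ssol z) w x - WsΦ z * Wr (csol z) w x := by
    intro z w; funext x; exact Wr_comb_left (hΦ z) w x
  have tΘΦ₀ : ∀ z : ℂ, Filter.Tendsto (fun x => Wr (Θ z) Φ₀ x)
      (nhdsWithin a (Set.Ioi a)) (nhds 1) := by
    intro z
    rw [hexΘ z Φ₀]
    have h := ((hWsΦ z).const_mul (WcΘ z)).sub ((hWcΦ z).const_mul (WsΘ z))
    rwa [hA z] at h
  have tΘΘ₀ : ∀ z : ℂ, Filter.Tendsto (fun x => Wr (Θ z) Θ₀ x)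
      (nhdsWithin a (Set.Ioi a)) (nhds 0) := by
    intro z
    rw [hexΘ z Θ₀]
    have h := ((hWsΘ z).const_mul (WcΘ z)).sub ((hWcΘ z).const_mul (WsΘ z))
    rwa [show WcΘ z * WsΘ z - WsΘ z * WcΘ z = 0 by ring] at h
  have tΦΦ₀ : ∀ z : ℂ, Filter.Tendsto (fun x => Wr (Φ z) Φ₀ x)
      (nhdsWithin a (Set.Ioi a)) (nhds 0) := by
    intro z
    rw [hexΦ z Φ₀]
    have h := ((hWsΦ z).const_mul (WcΦ z)).sub ((hWcΦ z).const_mul (WsΦ z))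
    rwa [show WcΦ z * WsΦ z - WsΦ z * WcΦ z = 0 by ring] at h
  have tΦΘ₀ : ∀ z : ℂ, Filter.Tendsto (fun x => Wr (Φ z) Θ₀ x)
      (nhdsWithin a (Set.Ioi a)) (nhds (-1)) := by
    intro z
    rw [hexΦ z Θ₀]
    have h := ((hWsΘ z).const_mul (WcΦ z)).sub ((hWcΘ z).const_mul (WsΦ z))
    rwa [show WcΦ z * WsΘ z - WsΦ z * WcΘ z = -1 by linear_combination - hA z] at h
  constructor
  · -- claim 1
    intro z x hx
    have e := Wr_comb_right (hΦ z) (Θ z) x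
    have e1 := Wr_comb_left (hΘ z) (ssol z) x
    have e2 := Wr_comb_left (hΘ z) (csol z) x
    have hss : Wr (ssol z) (ssol z) x = 0 := by simp only [Wr]; ring
    have hcc : Wr (csol z) (csol z) x = 0 := by simp only [Wr]; ring
    have hsc := wr_antisymm (ssol z) (csol z) x
    rw [e, e1, e2, hss, hcc, hsc, hcs z x hx]
    linear_combination hA z
  · intro z z'
    refine ⟨?_, ?_, ?_⟩
    · -- W_a(Θ z, Φ z') = 1
      have T : Filter.Tendsto (fun x => Wr (Θ z) Φ₀ x * (- Wr (Φ z') Θ₀ x)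
          + Wr (Θ z) Θ₀ x * Wr (Φ z') Φ₀ x) (nhdsWithin a (Set.Ioi a))
          (nhds (1 * (- (-1)) + 0 * 0)) :=
        ((tΘΦ₀ z).mul (tΦΘ₀ z').neg).add ((tΘΘ₀ z).mul (tΦΦ₀ z'))
      norm_num at T
      refine Filter.Tendsto.congr' ?_ T
      filter_upwards [hIoo] with x hx
      have P := plucker (Θ z) (Φ z') Φ₀ Θ₀ x
      have h2 : Wr Φ₀ Θ₀ x = -1 := by rw [wr_antisymm Φ₀ Θ₀ x, hW₀ x hx]
      have h3 := wr_antisymm Θ₀ (Φ z') x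
      rw [h2, h3] at P
      linear_combination P
    · -- W_a(Φ z', Φ z) = 0
      have T : Filter.Tendsto (fun x => Wr (Φ z') Φ₀ x * (- Wr (Φ z) Θ₀ x)
          + Wr (Φ z') Θ₀ x * Wr (Φ z) Φ₀ x) (nhdsWithin a (Set.Ioi a))
          (nhds (0 * (- (-1)) + (-1) * 0)) :=
        ((tΦΦ₀ z').mul (tΦΘ₀ z).neg).add ((tΦΘ₀ z').mul (tΦΦ₀ z))
      norm_num at T
      refine Filter.Tendsto.congr' ?_ T
      filter_upwards [hIoo] with x hx
      have P := plucker (Φ z') (Φ z) Φ₀ Θ₀ x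
      have h2 : Wr Φ₀ Θ₀ x = -1 := by rw [wr_antisymm Φ₀ Θ₀ x, hW₀ x hx]
      have h3 := wr_antisymm Θ₀ (Φ z) x
      rw [h2, h3] at P
      linear_combination P
    · -- W_a(Θ z', Θ z) = 0
      have T : Filter.Tendsto (fun x => Wr (Θ z') Φ₀ x * (- Wr (Θ z) Θ₀ x)
          + Wr (Θ z') Θ₀ x * Wr (Θ z) Φ₀ x) (nhdsWithin a (Set.Ioi a))
          (nhds (1 * (- 0) + 0 * 1)) :=
        ((tΘΦ₀ z').mul (tΘΘ₀ z).neg).add ((tΘΘ₀ z').mul (tΘΦ₀ z))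
      norm_num at T
      refine Filter.Tendsto.congr' ?_ T
      filter_upwards [hIoo] with x hx
      have P := plucker (Θ z') (Θ z) Φ₀ Θ₀ x
      have h2 : Wr Φ₀ Θ₀ x = -1 := by rw [wr_antisymm Φ₀ Θ₀ x, hW₀ x hx]
      have h3 := wr_antisymm Θ₀ (Θ z) x
      rw [h2, h3] at P
      linear_combination P
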